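/- Let f, g : 𝖱^n → 𝖱^n be continuous. Then D(f∘g) = D(g)·D(f); equivalently, for all nonempty I, K ⊆ N = {1,…,n}: D_{I,K}(f∘g) = 1 if and only if there exists a nonempty J ⊆ N with D_{I,J}(g) = 1 and D_{J,K}(f) = 1. -/

import Mathlib

noncomputable section
open Set

/-- The first uncountable ordinal `ω₁`. -/
def Omega1 : Ordinal := Ordinal.omega 1

/-- The closed long ray `𝖱`: `ω₁ × [0,1)` with the lexicographic order. -/
def LongRay : Type 1 := {o : Ordinal // o < Omega1} ×ₗ (Set.Ico (0:ℝ) 1)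

instance : LinearOrder LongRay :=
  inferInstanceAs (LinearOrder ({o : Ordinal // o < Omega1} ×ₗ (Set.Ico (0:ℝ) 1)))

/-- `𝖱` carries the order topology. -/
instance : TopologicalSpace LongRay := Preorder.topology LongRay
instance : OrderTopology LongRay := ⟨rfl⟩

lemma omega1_pos : (0 : Ordinal) < Omega1 := Ordinal.omega_pos 1

/-- The point `0 = (0,0)` of the long ray. -/
def rayZero : LongRay := toLex (⟨0, omega1_pos⟩, ⟨0, by simp⟩)

/-- Identification of the countable ordinal `o` with the point `(o,0)` of the long ray
(junk value for `o ≥ ω₁`). -/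
def ordR (o : Ordinal) : LongRay :=
  if h : o < Omega1 then toLex (⟨o, h⟩, ⟨0, by simp⟩) else rayZero

/-- The `I`-diagonal at height `c` (only the values of `c` off `I` are relevant). -/
def Delta (n : ℕ) (I : Finset (Fin n)) (c : Fin n → LongRay) : Set (Fin n → LongRay) :=
  {x | (∀ i ∈ I, ∀ i' ∈ I, x i = x i') ∧ ∀ j ∉ I, x j = c j}

/-- `f` is `I`-cofinal if `f` restricted to `Δ_I = Δ_I(0)` is unbounded. -/
def ICofinal (n : ℕ) (f : (Fin n → LongRay) → LongRay) (I : Finset (Fin n)) : Prop :=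
  ¬ BddAbove (f '' Delta n I (fun _ => rayZero))

/-- The cofinality class `𝔠(f) = {I : f is I-cofinal}`. -/
def cofClass (n : ℕ) (f : (Fin n → LongRay) → LongRay) : Set (Finset (Fin n)) :=
  {I | ICofinal n f I}

/-- `M_I(c) = {x : x_i ≥ c for all i ∈ I}`. -/
def MSet (n : ℕ) (I : Finset (Fin n)) (c : LongRay) : Set (Fin n → LongRay) :=
  {x | ∀ i ∈ I, c ≤ x i}

/-- `E_I(b,d) = {x ∈ M_I(d) : x_j = b_j for all j ∉ I}`. -/
def ESet (n : ℕ) (I : Finset (Fin n)) (b : Fin n → LongRay) (d : LongRay) :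
    Set (Fin n → LongRay) :=
  {x | (∀ i ∈ I, d ≤ x i) ∧ ∀ j ∉ I, x j = b j}

/-- `D_{I,J}(F) = 1`: there is `c` with `F(Δ_I) ∩ Δ_J(c)` unbounded in `Δ_J(c)`. -/
def DirRel (n : ℕ) (F : (Fin n → LongRay) → (Fin n → LongRay)) (I J : Finset (Fin n)) : Prop :=
  ∃ c : Fin n → LongRay,
    ¬ ∃ z : LongRay, ∀ y ∈ (F '' Delta n I (fun _ => rayZero)) ∩ Delta n J c, ∀ j ∈ J, y j ≤ z

namespace LongRay

def ord (x : LongRay) : Ordinal := ((ofLex x).1 : Ordinal)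
def re (x : LongRay) : ℝ := ((ofLex x).2 : ℝ)

lemma ord_lt (x : LongRay) : x.ord < Omega1 := (ofLex x).1.2
lemma re_mem (x : LongRay) : x.re ∈ Set.Ico (0:ℝ) 1 := (ofLex x).2.2
lemma re_nonneg (x : LongRay) : 0 ≤ x.re := x.re_mem.1
lemma re_lt_one (x : LongRay) : x.re < 1 := x.re_mem.2

def mk' (a : Ordinal) (ha : a < Omega1) (r : ℝ) (hr : r ∈ Set.Ico (0:ℝ) 1) : LongRay :=
  toLex (⟨a, ha⟩, ⟨r, hr⟩)

@[simp] lemma ord_mk' (a ha r hr) : (mk' a ha r hr).ord = a := rfl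
@[simp] lemma re_mk' (a ha r hr) : (mk' a ha r hr).re = r := rfl

lemma mk'_eta (x : LongRay) : mk' x.ord x.ord_lt x.re x.re_mem = x := rfl

lemma le_def {x y : LongRay} : x ≤ y ↔ x.ord < y.ord ∨ (x.ord = y.ord ∧ x.re ≤ y.re) := by
  have h := Prod.Lex.le_iff (x := x) (y := y)
  constructor
  · intro hxy
    rcases h.mp hxy with h1 | h2
    · exact Or.inl h1
    · exact Or.inr ⟨congrArg Subtype.val h2.1, h2.2⟩
  · intro hxy
    apply h.mpr
    rcases hxy with h1 | h2
    · exact Or.inl h1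
    · exact Or.inr ⟨Subtype.ext h2.1, h2.2⟩

lemma lt_def {x y : LongRay} : x < y ↔ x.ord < y.ord ∨ (x.ord = y.ord ∧ x.re < y.re) := by
  have h := Prod.Lex.lt_iff (x := x) (y := y)
  constructor
  · intro hxy
    rcases h.mp hxy with h1 | h2
    · exact Or.inl h1
    · exact Or.inr ⟨congrArg Subtype.val h2.1, h2.2⟩
  · intro hxy
    apply h.mpr
    rcases hxy with h1 | h2
    · exact Or.inl h1
    · exact Or.inr ⟨Subtype.ext h2.1, h2.2⟩

lemma ext' {x y : LongRay} (h1 : x.ord = y.ord) (h2 : x.re = y.re) : x = y :=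
  le_antisymm (le_def.mpr (Or.inr ⟨h1, h2.le⟩)) (le_def.mpr (Or.inr ⟨h1.symm, h2.ge⟩))

@[simp] lemma ord_rayZero : (rayZero).ord = 0 := rfl
@[simp] lemma re_rayZero : (rayZero).re = 0 := rfl

instance : OrderBot LongRay where
  bot := rayZero
  bot_le x := by
    rcases eq_or_lt_of_le (zero_le (a := x.ord)) with h | h
    · exact le_def.mpr (Or.inr ⟨h.symm ▸ rfl, by simpa using x.re_nonneg⟩)
    · exact le_def.mpr (Or.inl h)

lemma bot_eq : (⊥ : LongRay) = rayZero := rfl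

lemma ord_mono {x y : LongRay} (h : x ≤ y) : x.ord ≤ y.ord := by
  rcases le_def.mp h with h1 | h2
  · exact h1.le
  · exact h2.1.le

end LongRay
namespace LongRay

lemma succ_lt_omega1 {a : Ordinal} (h : a < Omega1) : a + 1 < Omega1 := by
  have := (Cardinal.isSuccLimit_omega 1).succ_lt h
  rwa [Order.succ_eq_add_one] at this

theorem exists_isLUB {S : Set LongRay} (hne : S.Nonempty) (hbdd : BddAbove S) :
    ∃ u : LongRay, IsLUB S u := by
  obtain ⟨b, hb⟩ := hbdd
  set A : Set Ordinal := LongRay.ord '' S with hA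
  have hAne : A.Nonempty := hne.image _
  have hAbdd : BddAbove A := by
    refine ⟨b.ord, ?_⟩
    rintro a ⟨x, hx, rfl⟩
    exact ord_mono (hb hx)
  set α : Ordinal := sSup A with hα
  have hαlt : α < Omega1 := by
    have : α ≤ b.ord := csSup_le hAne (fun a ⟨x, hx, hxa⟩ => hxa ▸ ord_mono (hb hx))
    exact lt_of_le_of_lt this b.ord_lt
  have hord_le : ∀ x ∈ S, x.ord ≤ α := fun x hx => le_csSup hAbdd ⟨x, hx, rfl⟩
  by_cases hatt : ∃ x ∈ S, x.ord = α
  · -- attained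
    set T : Set ℝ := LongRay.re '' {x ∈ S | x.ord = α} with hT
    obtain ⟨x0, hx0S, hx0⟩ := hatt
    have hTne : T.Nonempty := ⟨x0.re, x0, ⟨hx0S, hx0⟩, rfl⟩
    have hTsub : ∀ r ∈ T, r ∈ Ico (0:ℝ) 1 := by
      rintro r ⟨x, _, rfl⟩; exact x.re_mem
    have hTbdd : BddAbove T := ⟨1, fun r hr => (hTsub r hr).2.le⟩
    set ρ : ℝ := sSup T with hρ
    have hρ0 : 0 ≤ ρ := le_trans (hTsub _ ⟨x0, ⟨hx0S, hx0⟩, rfl⟩).1 (le_csSup hTbdd ⟨x0, ⟨hx0S, hx0⟩, rfl⟩)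
    have hρ1 : ρ ≤ 1 := csSup_le hTne (fun r hr => (hTsub r hr).2.le)
    -- upper-bound ⇒ facts
    have key : ∀ z : LongRay, z ∈ upperBounds S → α ≤ z.ord ∧ (z.ord = α → ρ ≤ z.re) := by
      intro z hz
      constructor
      · exact le_trans (le_of_eq hx0.symm) (ord_mono (hz hx0S))
      · intro hzα
        refine csSup_le hTne ?_
        rintro r ⟨x, ⟨hxS, hxα⟩, rfl⟩
        rcases le_def.mp (hz hxS) with h1 | h2
        · exact absurd (hxα ▸ hzα ▸ h1) (lt_irrefl _)
        · exact h2.2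
    by_cases hρlt : ρ < 1
    · refine ⟨mk' α hαlt ρ (Set.mem_Ico.mpr ⟨hρ0, hρlt⟩), ?_, ?_⟩
      · intro x hx
        rcases eq_or_lt_of_le (hord_le x hx) with h | h
        · refine le_def.mpr (Or.inr ⟨by simpa using h, ?_⟩)
          simpa using le_csSup hTbdd ⟨x, ⟨hx, h⟩, rfl⟩
        · exact le_def.mpr (Or.inl (by simpa using h))
      · intro z hz
        obtain ⟨h1, h2⟩ := key z hz
        rcases eq_or_lt_of_le h1 with h | h
        · exact le_def.mpr (Or.inr ⟨by simpa using h, by simpa using h2 h.symm⟩)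
        · exact le_def.mpr (Or.inl (by simpa using h))
    · have hρeq : ρ = 1 := le_antisymm hρ1 (not_lt.mp hρlt)
      refine ⟨mk' (α+1) (succ_lt_omega1 hαlt) 0 (by simp), ?_, ?_⟩
      · intro x hx
        exact le_def.mpr (Or.inl (by simpa using lt_of_le_of_lt (hord_le x hx) (lt_add_one α)))
      · intro z hz
        obtain ⟨h1, h2⟩ := key z hz
        rcases eq_or_lt_of_le h1 with h | h
        · exact absurd (hρeq ▸ h2 h.symm) (not_le.mpr z.re_lt_one)
        · rcases eq_or_lt_of_le (Order.add_one_le_of_lt h) with h' | h'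
          · exact le_def.mpr (Or.inr ⟨by simpa using h', by simpa using z.re_nonneg⟩)
          · exact le_def.mpr (Or.inl (by simpa using h'))
  · -- not attained
    refine ⟨mk' α hαlt 0 (by simp), ?_, ?_⟩
    · intro x hx
      have : x.ord < α := lt_of_le_of_ne (hord_le x hx) (fun h => hatt ⟨x, hx, h⟩)
      exact le_def.mpr (Or.inl (by simpa using this))
    · intro z hz
      have h1 : α ≤ z.ord := csSup_le hAne (by rintro a ⟨x, hx, rfl⟩; exact ord_mono (hz hx))
      rcases eq_or_lt_of_le h1 with h | h
      · exact le_def.mpr (Or.inr ⟨by simpa using h, by simpa using z.re_nonneg⟩)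
      · exact le_def.mpr (Or.inl (by simpa using h))

open Classical in
def lubOr (S : Set LongRay) : LongRay :=
  if h : S.Nonempty ∧ BddAbove S then (exists_isLUB h.1 h.2).choose else rayZero

instance : SupSet LongRay := ⟨lubOr⟩

lemma sSup_def (S : Set LongRay) : sSup S = lubOr S := rfl

lemma isLUB_sSup' {S : Set LongRay} (h1 : BddAbove S) (h2 : S.Nonempty) : IsLUB S (sSup S) := by
  rw [sSup_def, lubOr, dif_pos ⟨h2, h1⟩]
  exact (exists_isLUB h2 h1).choose_spec

instance : ConditionallyCompleteLinearOrder LongRay :=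
  { conditionallyCompleteLatticeOfLatticeOfsSup LongRay (fun S h1 h2 => isLUB_sSup' h1 h2),
    (inferInstance : LinearOrder LongRay) with
    csSup_of_not_bddAbove := by
      intro s hs
      rw [sSup_def, sSup_def, lubOr, lubOr, dif_neg (by tauto), dif_neg (by simp)]
    csInf_of_not_bddBelow := fun s hs => absurd (OrderBot.bddBelow s) hs }

end LongRay
namespace LongRay

lemma ne_bot_iff {v : LongRay} : v ≠ ⊥ ↔ 0 < v.ord ∨ 0 < v.re := by
  constructor
  · intro h
    by_contra hc
    push_neg at hc
    refine h (ext' ?_ ?_)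
    · exact le_antisymm hc.1 (zero_le (a := _))
    · exact le_antisymm hc.2 v.re_nonneg
  · rintro (h | h) rfl
    · exact absurd h (by simp [bot_eq])
    · exact absurd h (by simp [bot_eq])

lemma div_succ_le {c d : ℝ} (hc : 0 ≤ c) (hd : 0 < d) : ∃ n : ℕ, c / (n + 1) ≤ d := by
  obtain ⟨n, hn⟩ := exists_nat_ge (c / d)
  refine ⟨n, ?_⟩
  rw [div_le_iff₀ (by positivity)]
  have h1 : c / d ≤ n := hn
  have h2 : c ≤ d * n := by
    rw [div_le_iff₀ hd] at h1
    linarith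
  nlinarith

instance : NoMaxOrder LongRay where
  exists_gt x := by
    refine ⟨mk' (x.ord + 1) (succ_lt_omega1 x.ord_lt) 0 (by simp), ?_⟩
    exact lt_def.mpr (Or.inl (by simpa using lt_add_one x.ord))

instance : DenselyOrdered LongRay where
  dense x y hxy := by
    rcases lt_def.mp hxy with h | ⟨h1, h2⟩
    · refine ⟨mk' x.ord x.ord_lt ((x.re + 1)/2) (Set.mem_Ico.mpr ⟨by nlinarith [x.re_nonneg], by nlinarith [x.re_lt_one]⟩), ?_, ?_⟩
      · exact lt_def.mpr (Or.inr ⟨rfl, by simp; nlinarith [x.re_lt_one]⟩)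
      · exact lt_def.mpr (Or.inl (by simpa using h))
    · refine ⟨mk' x.ord x.ord_lt ((x.re + y.re)/2) (Set.mem_Ico.mpr ⟨by nlinarith [x.re_nonneg, y.re_nonneg], by nlinarith [x.re_lt_one, y.re_lt_one]⟩), ?_, ?_⟩
      · exact lt_def.mpr (Or.inr ⟨rfl, by simp; nlinarith⟩)
      · exact lt_def.mpr (Or.inr ⟨h1, by simp; nlinarith⟩)

lemma countable_bddAbove {S : Set LongRay} (hS : S.Countable) : BddAbove S := by
  rcases S.eq_empty_or_nonempty with rfl | hne
  · exact bddAbove_empty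
  obtain ⟨e, rfl⟩ := hS.exists_eq_range hne
  have h1 : ∀ n : ℕ, (e n).ord + 1 < Omega1 := fun n => succ_lt_omega1 (e n).ord_lt
  have h2 : iSup (fun n : ℕ => (e n).ord + 1) < Omega1 := by
    exact Ordinal.iSup_lt_omega_one h1
  refine ⟨mk' _ h2 0 (by simp), ?_⟩
  rintro x ⟨n, rfl⟩
  refine le_of_lt (lt_def.mpr (Or.inl ?_))
  simp only [ord_mk']
  exact lt_of_lt_of_le (lt_add_one _) (le_ciSup (Ordinal.bddAbove_range _) n)

lemma bddAbove_range_seq (x : ℕ → LongRay) : BddAbove (Set.range x) :=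
  countable_bddAbove (Set.countable_range x)

/-- countable coinitial sequence above any point -/
lemma exists_coinitial_above (v : LongRay) :
    ∃ w : ℕ → LongRay, (∀ n, v < w n) ∧ ∀ y, v < y → ∃ n, w n ≤ y := by
  have hre1 := v.re_lt_one
  have hre0 := v.re_nonneg
  have hpos : ∀ n : ℕ, (0:ℝ) < (1 - v.re)/(n+2) := by
    intro n
    apply div_pos (by linarith) (by positivity)
  have hlt1 : ∀ n : ℕ, v.re + (1 - v.re)/(n+2) < 1 := by
    intro n
    have h2 : (1 - v.re)/(n+2) < (1 - v.re) := by
      rw [div_lt_iff₀ (by positivity)]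
      nlinarith
    linarith
  refine ⟨fun n => mk' v.ord v.ord_lt (v.re + (1 - v.re)/(n+2))
    (Set.mem_Ico.mpr ⟨by have := hpos n; linarith, hlt1 n⟩), fun n => ?_, fun y hy => ?_⟩
  · refine lt_def.mpr (Or.inr ⟨rfl, ?_⟩)
    simp only [re_mk']
    have := hpos n
    linarith
  · rcases lt_def.mp hy with h | ⟨h1, h2⟩
    · exact ⟨0, le_def.mpr (Or.inl (by simpa using h))⟩
    · obtain ⟨n, hn⟩ := div_succ_le (c := 1 - v.re) (d := y.re - v.re) (by linarith) (by linarith)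
      have hn2 : (1 - v.re)/(n+2) ≤ (1 - v.re)/(n+1) := by
        apply div_le_div_of_nonneg_left (by linarith) (by positivity) (by push_cast; linarith)
      exact ⟨n, le_def.mpr (Or.inr ⟨h1.symm ▸ rfl, by simp only [re_mk']; linarith⟩)⟩

end LongRay
namespace LongRay

lemma countable_Iio_ord {a : Ordinal.{0}} (ha : a < Omega1) : (Set.Iio a).Countable := by
  rw [Cardinal.countable_iff_lt_aleph_one, Ordinal.mk_Iio_ordinal, Cardinal.lift_lt_aleph_one,
    ← Cardinal.lt_ord, Cardinal.ord_aleph]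
  exact ha

/-- countable cofinal sequence below any nonbot point -/
lemma exists_cofinal_below (v : LongRay) (hv : v ≠ ⊥) :
    ∃ u : ℕ → LongRay, (∀ n, u n < v) ∧ ∀ y, y < v → ∃ n, y ≤ u n := by
  by_cases hre : 0 < v.re
  · -- real part positive: approach within same ordinal block
    have hre1 := v.re_lt_one
    refine ⟨fun n => mk' v.ord v.ord_lt (v.re - v.re/(n+1))
      (Set.mem_Ico.mpr ⟨by
        have : v.re/(n+1) ≤ v.re/1 := by
          apply div_le_div_of_nonneg_left (le_of_lt hre) one_pos
          push_cast; linarith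
        simp at this; linarith,
       by
        have : 0 < v.re/(n+1 : ℝ) := by positivity
        linarith⟩), fun n => ?_, fun y hy => ?_⟩
    · refine lt_def.mpr (Or.inr ⟨rfl, ?_⟩)
      simp only [re_mk']
      have : 0 < v.re/(n+1 : ℝ) := by positivity
      linarith
    · rcases lt_def.mp hy with h | ⟨h1, h2⟩
      · refine ⟨0, le_def.mpr (Or.inl (by simpa using h))⟩
      · obtain ⟨n, hn⟩ := div_succ_le (c := v.re) (d := v.re - y.re) (le_of_lt hre) (by linarith)
        exact ⟨n, le_def.mpr (Or.inr ⟨h1, by simp only [re_mk']; linarith⟩)⟩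
  · -- real part zero
    have hre0 : v.re = 0 := le_antisymm (not_lt.mp hre) v.re_nonneg
    have hvord : 0 < v.ord := by
      rcases ne_bot_iff.mp hv with h | h
      · exact h
      · exact absurd h (by rw [hre0]; exact lt_irrefl 0)
    have hlty : ∀ y : LongRay, y < v → y.ord < v.ord := by
      intro y hy
      rcases lt_def.mp hy with h | ⟨h1, h2⟩
      · exact h
      · exact absurd (hre0 ▸ h2) (not_lt.mpr y.re_nonneg)
    rcases Ordinal.zero_or_succ_or_isSuccLimit v.ord with h0 | ⟨a, ha⟩ | hlim
    · exact absurd h0 (ne_of_gt hvord)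
    · -- successor
      have halt : a < Omega1 := lt_trans (ha ▸ Order.lt_succ a) v.ord_lt
      have haltv : a < v.ord := ha ▸ Order.lt_succ a
      refine ⟨fun n => mk' a halt (1 - 1/(n+1))
        (Set.mem_Ico.mpr ⟨by
          have h1 : (1:ℝ)/(n+1) ≤ 1 := by
            rw [div_le_one (by positivity)]
            push_cast; linarith
          linarith,
         by
          have : 0 < (1:ℝ)/(n+1) := by positivity
          linarith⟩), fun n => ?_, fun y hy => ?_⟩
      · exact lt_def.mpr (Or.inl (by simpa using haltv))
      · have hyo : y.ord < v.ord := hlty y hy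
        have hya : y.ord ≤ a := by
          rw [← ha] at hyo
          exact Order.le_of_lt_succ hyo
        rcases eq_or_lt_of_le hya with h | h
        · obtain ⟨n, hn⟩ := div_succ_le (c := (1:ℝ)) (d := 1 - y.re) one_pos.le
            (by have := y.re_lt_one; linarith)
          exact ⟨n, le_def.mpr (Or.inr ⟨by simpa using h, by simp only [re_mk']; linarith⟩)⟩
        · exact ⟨0, le_def.mpr (Or.inl (by simpa using h))⟩
    · -- limit
      have hc : (Set.Iio v.ord).Countable := countable_Iio_ord v.ord_lt
      have hne : (Set.Iio v.ord).Nonempty := ⟨0, hvord⟩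
      obtain ⟨e, he⟩ := hc.exists_eq_range hne
      have helt : ∀ n, e n < v.ord := by
        intro n
        have : e n ∈ Set.Iio v.ord := he ▸ Set.mem_range_self n
        exact this
      refine ⟨fun n => mk' (e n) (lt_trans (helt n) v.ord_lt) 0 (by simp),
        fun n => ?_, fun y hy => ?_⟩
      · exact lt_def.mpr (Or.inl (by simpa using helt n))
      · have hyo : y.ord < v.ord := hlty y hy
        have hsucc : y.ord + 1 ∈ Set.Iio v.ord := by
          have := hlim.succ_lt hyo
          rwa [Order.succ_eq_add_one] at this
        rw [he] at hsucc
        obtain ⟨n, hn⟩ := hsucc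
        refine ⟨n, le_of_lt (lt_def.mpr (Or.inl ?_))⟩
        simp only [ord_mk']
        rw [hn]
        exact lt_add_one y.ord

end LongRay
namespace LongRay

open Filter Topology

lemma seq_rec {α : Type*} (P : α → α → Prop) (h : ∀ x, ∃ y, P x y) (x0 : α) :
    ∃ x : ℕ → α, x 0 = x0 ∧ ∀ n, P (x n) (x (n + 1)) := by
  choose g hg using h
  refine ⟨fun n => g^[n] x0, rfl, fun n => ?_⟩
  show P (g^[n] x0) (g^[n+1] x0)
  rw [Function.iterate_succ_apply']
  exact hg _

/-- From membership in a closure, extract a convergent sequence. -/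
lemma seq_of_mem_closure {S : Set LongRay} {a : LongRay} (ha : a ∈ closure S) :
    ∃ x : ℕ → LongRay, (∀ n, x n ∈ S) ∧ Tendsto x atTop (𝓝 a) := by
  obtain ⟨w, hw1, hw2⟩ := exists_coinitial_above a
  -- monotone decreasing-ish upper approximations
  set w' : ℕ → LongRay := fun n => ((Finset.range (n+1)).image w).min' (by simp) with hw'
  have hw'lt : ∀ n, a < w' n := by
    intro n
    have : w' n ∈ (Finset.range (n+1)).image w := Finset.min'_mem _ _
    obtain ⟨i, _, hi⟩ := Finset.mem_image.mp this
    rw [← hi]; exact hw1 i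
  have hw'le : ∀ m n, m ≤ n → w' n ≤ w m := by
    intro m n hmn
    apply Finset.min'_le
    exact Finset.mem_image.mpr ⟨m, Finset.mem_range.mpr (Nat.lt_succ_of_le hmn), rfl⟩
  by_cases hbot : a = ⊥
  · -- only upper approximations needed
    have hmem : ∀ n, Set.Iio (w' n) ∈ 𝓝 a := fun n => Iio_mem_nhds (hw'lt n)
    have hpick : ∀ n, ∃ y, y ∈ S ∧ y < w' n := by
      intro n
      obtain ⟨y, hy⟩ := mem_closure_iff_nhds.mp ha _ (hmem n)
      exact ⟨y, hy.2, hy.1⟩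
    choose x hxS hxlt using hpick
    refine ⟨x, hxS, ?_⟩
    rw [tendsto_order]
    constructor
    · intro b hb
      rw [hbot] at hb
      exact absurd hb (not_lt_bot)
    · intro b hb
      obtain ⟨m, hm⟩ := hw2 b hb
      refine eventually_atTop.mpr ⟨m, fun n hn => ?_⟩
      exact lt_of_lt_of_le (hxlt n) (le_trans (hw'le m n hn) hm)
  · obtain ⟨u, hu1, hu2⟩ := exists_cofinal_below a hbot
    set u' : ℕ → LongRay := fun n => ((Finset.range (n+1)).image u).max' (by simp) with hu'
    have hu'lt : ∀ n, u' n < a := by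
      intro n
      have : u' n ∈ (Finset.range (n+1)).image u := Finset.max'_mem _ _
      obtain ⟨i, _, hi⟩ := Finset.mem_image.mp this
      rw [← hi]; exact hu1 i
    have hu'ge : ∀ m n, m ≤ n → u m ≤ u' n := by
      intro m n hmn
      apply Finset.le_max'
      exact Finset.mem_image.mpr ⟨m, Finset.mem_range.mpr (Nat.lt_succ_of_le hmn), rfl⟩
    have hmem : ∀ n, Set.Ioo (u' n) (w' n) ∈ 𝓝 a := fun n => Ioo_mem_nhds (hu'lt n) (hw'lt n)
    have hpick : ∀ n, ∃ y, y ∈ S ∧ u' n < y ∧ y < w' n := by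
      intro n
      obtain ⟨y, hy⟩ := mem_closure_iff_nhds.mp ha _ (hmem n)
      exact ⟨y, hy.2, hy.1.1, hy.1.2⟩
    choose x hxS hxgt hxlt using hpick
    refine ⟨x, hxS, ?_⟩
    rw [tendsto_order]
    constructor
    · intro b hb
      obtain ⟨m, hm⟩ := hu2 b hb
      refine eventually_atTop.mpr ⟨m, fun n hn => ?_⟩
      exact lt_of_le_of_lt (le_trans hm (hu'ge m n hn)) (hxgt n)
    · intro b hb
      obtain ⟨m, hm⟩ := hw2 b hb
      refine eventually_atTop.mpr ⟨m, fun n hn => ?_⟩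
      exact lt_of_lt_of_le (hxlt n) (le_trans (hw'le m n hn) hm)

end LongRay
namespace LongRay

open Filter Topology

/-- Closed unbounded set -/
def Club (C : Set LongRay) : Prop :=
  IsClosed C ∧ ∀ a : LongRay, ∃ t, a ≤ t ∧ t ∈ C

lemma image_Iic_bddAbove {f : LongRay → LongRay} (hf : Continuous f) (b : LongRay) :
    BddAbove (f '' Set.Iic b) := by
  have h1 : Set.Iic b = Set.Icc ⊥ b := by ext x; simp
  rw [h1]
  exact (isCompact_Icc.image hf).bddAbove

lemma unbounded_iff {S : Set LongRay} : ¬BddAbove S ↔ ∀ z, ∃ x ∈ S, z < x :=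
  not_bddAbove_iff

lemma monotone_tendsto {x : ℕ → LongRay} (hx : Monotone x) :
    Tendsto x atTop (𝓝 (⨆ n, x n)) :=
  tendsto_atTop_ciSup hx (bddAbove_range_seq x)

lemma le_ciSup_seq (x : ℕ → LongRay) (n : ℕ) : x n ≤ ⨆ m, x m :=
  le_ciSup (bddAbove_range_seq x) n

/-- LEMMA A : an unbounded continuous self-map of the ray has unboundedly many fixed points. -/
lemma fix_club {f : LongRay → LongRay} (hf : Continuous f) (hub : ¬BddAbove (Set.range f)) :
    Club {t | f t = t} := by
  refine ⟨isClosed_eq hf continuous_id, fun a => ?_⟩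
  -- step relation on pairs (t, b)
  set P : (LongRay × LongRay) → (LongRay × LongRay) → Prop := fun p q =>
    p.1 ≤ q.1 ∧ q.2 ≤ q.1 ∧ p.1 ≤ q.2 ∧ (∀ s, s ≤ p.1 → f s ≤ q.1) ∧ p.1 ≤ f q.2 with hP
  have hstep : ∀ p, ∃ q, P p q := by
    rintro ⟨t, b⟩
    obtain ⟨m, hm⟩ := image_Iic_bddAbove hf t
    obtain ⟨y, ⟨b', rfl⟩, hy⟩ := unbounded_iff.mp hub (max m t)
    refine ⟨(max b' (max m t), b'), le_trans (le_max_right m t) (le_max_right b' _),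
      le_max_left _ _, ?_, fun s hs => ?_, le_trans (le_max_right m t) (le_of_lt hy)⟩
    · -- t ≤ b'
      by_contra hc
      push_neg at hc
      have : f b' ≤ m := hm (Set.mem_image_of_mem f (le_of_lt hc))
      exact absurd (lt_of_le_of_lt (le_max_left m t) hy) (not_lt.mpr this)
    · exact le_trans (le_trans (hm (Set.mem_image_of_mem f hs)) (le_max_left m t)) (le_max_right b' _)
  obtain ⟨x, hx0, hxs⟩ := seq_rec P hstep (a, a)
  set t : ℕ → LongRay := fun n => (x n).1 with ht
  set b : ℕ → LongRay := fun n => (x n).2 with hb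
  have htmono : Monotone t := monotone_nat_of_le_succ (fun n => (hxs n).1)
  set L : LongRay := ⨆ n, t n with hL
  have htL : Tendsto t atTop (𝓝 L) := monotone_tendsto htmono
  have htsL : Tendsto (fun n => t (n+1)) atTop (𝓝 L) :=
    htL.comp (tendsto_add_atTop_nat 1)
  have hbsq : Tendsto (fun n => b (n+1)) atTop (𝓝 L) := by
    refine tendsto_of_tendsto_of_tendsto_of_le_of_le htL htsL ?_ ?_
    · exact fun n => (hxs n).2.2.1
    · exact fun n => (hxs n).2.1
  have hfb : Tendsto (fun n => f (b (n+1))) atTop (𝓝 (f L)) :=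
    (hf.tendsto L).comp hbsq
  have hft : Tendsto (fun n => f (t n)) atTop (𝓝 (f L)) :=
    (hf.tendsto L).comp htL
  have hup : f L ≤ L := by
    refine le_of_tendsto hft (eventually_atTop.mpr ⟨0, fun n _ => ?_⟩)
    exact le_trans ((hxs n).2.2.2.1 (t n) (le_refl _)) (le_ciSup_seq t (n+1))
  have hdown : L ≤ f L := by
    refine ciSup_le (fun m => ?_)
    refine ge_of_tendsto hfb (eventually_atTop.mpr ⟨m, fun n hn => ?_⟩)
    exact le_trans (htmono hn) (hxs n).2.2.2.2
  refine ⟨L, ?_, le_antisymm hup hdown⟩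
  calc a = t 0 := by show a = (x 0).1; rw [hx0]
    _ ≤ L := le_ciSup_seq t 0

/-- countable intersections of clubs are clubs -/
lemma club_iInter {C : ℕ → Set LongRay} (h : ∀ n, Club (C n)) : Club (⋂ n, C n) := by
  refine ⟨isClosed_iInter (fun n => (h n).1), fun a => ?_⟩
  set P : (LongRay × ℕ) → (LongRay × ℕ) → Prop := fun p q =>
    q.2 = p.2 + 1 ∧ p.1 ≤ q.1 ∧ ∀ k ≤ p.2, ∃ x ∈ C k, p.1 ≤ x ∧ x ≤ q.1 with hP
  have hstep : ∀ p, ∃ q, P p q := by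
    rintro ⟨s, m⟩
    have hpick : ∀ k : ℕ, ∃ x, s ≤ x ∧ x ∈ C k := fun k => (h k).2 s
    choose xk hxk1 hxk2 using hpick
    refine ⟨(((Finset.range (m+1)).image xk).max' (by simp) ⊔ s, m + 1), rfl, le_sup_right,
      fun k hk => ⟨xk k, hxk2 k, hxk1 k, ?_⟩⟩
    refine le_trans ?_ le_sup_left
    exact Finset.le_max' _ _ (Finset.mem_image.mpr ⟨k, Finset.mem_range.mpr (Nat.lt_succ_of_le hk), rfl⟩)
  obtain ⟨x, hx0, hxs⟩ := seq_rec P hstep (a, 0)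
  set s : ℕ → LongRay := fun n => (x n).1 with hs
  have hidx : ∀ n, (x n).2 = n := by
    intro n
    induction n with
    | zero => rw [hx0]
    | succ n ih => rw [(hxs n).1, ih]
  have hsmono : Monotone s := monotone_nat_of_le_succ (fun n => (hxs n).2.1)
  set L : LongRay := ⨆ n, s n with hL
  have hsL : Tendsto s atTop (𝓝 L) := monotone_tendsto hsmono
  refine ⟨L, ?_, ?_⟩
  · calc a = s 0 := by show a = (x 0).1; rw [hx0]
      _ ≤ L := le_ciSup_seq s 0
  · refine Set.mem_iInter.mpr (fun k => ?_)
    -- pick witnesses in C k for n ≥ k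
    have hw : ∀ n, k ≤ n → ∃ x' ∈ C k, s n ≤ x' ∧ x' ≤ s (n+1) := by
      intro n hn
      have := (hxs n).2.2 k (by rw [hidx n]; exact hn)
      exact this
    choose! y hy1 hy2 hy3 using hw
    have hyt : Tendsto y atTop (𝓝 L) := by
      have hsL' : Tendsto (fun n => s (n+1)) atTop (𝓝 L) := hsL.comp (tendsto_add_atTop_nat 1)
      refine tendsto_of_tendsto_of_tendsto_of_le_of_le' hsL hsL' ?_ ?_
      · exact eventually_atTop.mpr ⟨k, fun n hn => hy2 n hn⟩
      · exact eventually_atTop.mpr ⟨k, fun n hn => hy3 n hn⟩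
    refine (h k).1.mem_of_tendsto hyt (eventually_atTop.mpr ⟨k, fun n hn => hy1 n hn⟩)

/-- LEMMA B : a bounded continuous self-map of the ray is eventually constant. -/
lemma eventually_const {f : LongRay → LongRay} (hf : Continuous f)
    (hbdd : BddAbove (Set.range f)) : ∃ a v, ∀ t, a ≤ t → f t = v := by
  set s : LongRay → LongRay := fun a => sSup (f '' Set.Ici a) with hsdef
  set i : LongRay → LongRay := fun a => sInf (f '' Set.Ici a) with hidef
  have hne : ∀ a : LongRay, (f '' Set.Ici a).Nonempty := fun a => ⟨f a, a, le_refl a, rfl⟩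
  have hba : ∀ a : LongRay, BddAbove (f '' Set.Ici a) :=
    fun a => hbdd.mono (Set.image_subset_range f _)
  have hfs : ∀ a t, a ≤ t → f t ≤ s a := fun a t ht => le_csSup (hba a) ⟨t, ht, rfl⟩
  have hfi : ∀ a t, a ≤ t → i a ≤ f t := fun a t ht => csInf_le (OrderBot.bddBelow _) ⟨t, ht, rfl⟩
  have his : ∀ a b : LongRay, i a ≤ s b := fun a b =>
    le_trans (hfi a (a ⊔ b) le_sup_left) (hfs b (a ⊔ b) le_sup_right)
  have hrs : BddAbove (Set.range i) := ⟨s ⊥, by rintro _ ⟨a, rfl⟩; exact his a ⊥⟩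
  set u : LongRay := sSup (Set.range i) with hu
  set v : LongRay := sInf (Set.range s) with hv
  have hune : (Set.range i).Nonempty := ⟨i ⊥, ⊥, rfl⟩
  have hsne : (Set.range s).Nonempty := ⟨s ⊥, ⊥, rfl⟩
  have huv : u ≤ v := by
    refine csSup_le hune ?_
    rintro _ ⟨a, rfl⟩
    refine le_csInf hsne ?_
    rintro _ ⟨b, rfl⟩
    exact his a b
  have hueqv : u = v := by
    by_contra hne'
    have hult : u < v := lt_of_le_of_ne huv hne'
    obtain ⟨m1, hm1, hm1'⟩ := exists_between hult
    obtain ⟨m2, hm2, hm2'⟩ := exists_between hm1'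
    -- cofinally below m1 and cofinally above m2
    have hlow : ∀ a : LongRay, ∃ p, a ≤ p ∧ f p < m1 := by
      intro a
      have h1 : i a < m1 := lt_of_le_of_lt (le_csSup hrs ⟨a, rfl⟩) hm1
      obtain ⟨_, ⟨p, hp, rfl⟩, hp2⟩ := exists_lt_of_csInf_lt (hne a) h1
      exact ⟨p, hp, hp2⟩
    have hhigh : ∀ a : LongRay, ∃ q, a ≤ q ∧ m2 < f q := by
      intro a
      have h1 : m2 < s a := lt_of_lt_of_le hm2' (csInf_le (OrderBot.bddBelow _) ⟨a, rfl⟩)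
      obtain ⟨_, ⟨q, hq, rfl⟩, hq2⟩ := exists_lt_of_lt_csSup (hne a) h1
      exact ⟨q, hq, hq2⟩
    set P : (LongRay × LongRay) → (LongRay × LongRay) → Prop := fun pq pq' =>
      pq.2 ≤ pq'.1 ∧ pq'.1 ≤ pq'.2 ∧ f pq'.1 < m1 ∧ m2 < f pq'.2 with hP
    have hstep : ∀ pq, ∃ pq', P pq pq' := by
      rintro ⟨p, q⟩
      obtain ⟨p', hp1, hp2⟩ := hlow q
      obtain ⟨q', hq1, hq2⟩ := hhigh p'
      exact ⟨(p', q'), hp1, hq1, hp2, hq2⟩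
    obtain ⟨x, hx0, hxs⟩ := seq_rec P hstep (⊥, ⊥)
    set p : ℕ → LongRay := fun n => (x n).1 with hp
    set q : ℕ → LongRay := fun n => (x n).2 with hq
    have hqmono : Monotone q := monotone_nat_of_le_succ
      (fun n => le_trans (hxs n).1 (hxs n).2.1)
    set L : LongRay := ⨆ n, q n with hLd
    have hqL : Tendsto q atTop (𝓝 L) := monotone_tendsto hqmono
    have hpL : Tendsto (fun n => p (n+1)) atTop (𝓝 L) := by
      refine tendsto_of_tendsto_of_tendsto_of_le_of_le hqL (hqL.comp (tendsto_add_atTop_nat 1))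
        (fun n => (hxs n).1) (fun n => (hxs n).2.1)
    have h1 : f L ≤ m1 := by
      refine le_of_tendsto ((hf.tendsto L).comp hpL) (Eventually.of_forall (fun n => (le_of_lt (hxs n).2.2.1)))
    have h2 : m2 ≤ f L := by
      refine ge_of_tendsto ((hf.tendsto L).comp (hqL.comp (tendsto_add_atTop_nat 1)))
        (Eventually.of_forall (fun n => (le_of_lt (hxs n).2.2.2)))
    exact absurd (lt_of_le_of_lt (le_trans h2 h1) hm2) (lt_irrefl m2)
  -- now squeeze with countable neighborhoods of v
  obtain ⟨w, hw1, hw2⟩ := exists_coinitial_above v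
  have hupper : ∀ n : ℕ, ∃ a : LongRay, ∀ t, a ≤ t → f t < w n := by
    intro n
    have h1 : v < w n := hw1 n
    obtain ⟨_, ⟨a, rfl⟩, ha2⟩ := exists_lt_of_csInf_lt hsne h1
    exact ⟨a, fun t ht => lt_of_le_of_lt (hfs a t ht) ha2⟩
  choose aw haw using hupper
  obtain ⟨A1, hA1⟩ := bddAbove_range_seq aw
  have hAup : ∀ t, A1 ≤ t → f t ≤ v := by
    intro t ht
    by_contra hc
    push_neg at hc
    obtain ⟨n, hn⟩ := hw2 (f t) hc
    exact absurd (haw n t (le_trans (hA1 (Set.mem_range_self n)) ht)) (not_lt.mpr hn)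
  by_cases hvbot : v = ⊥
  · refine ⟨A1, v, fun t ht => le_antisymm (hAup t ht) ?_⟩
    rw [hvbot]; exact bot_le
  · obtain ⟨uu, huu1, huu2⟩ := exists_cofinal_below v hvbot
    have hlower : ∀ n : ℕ, ∃ a : LongRay, ∀ t, a ≤ t → uu n < f t := by
      intro n
      have h1 : uu n < u := by rw [hueqv]; exact huu1 n
      obtain ⟨_, ⟨a, rfl⟩, ha2⟩ := exists_lt_of_lt_csSup hune h1
      exact ⟨a, fun t ht => lt_of_lt_of_le ha2 (hfi a t ht)⟩
    choose au hau using hlower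
    obtain ⟨A2, hA2⟩ := bddAbove_range_seq au
    refine ⟨A1 ⊔ A2, v, fun t ht => le_antisymm (hAup t (le_trans le_sup_left ht)) ?_⟩
    by_contra hc
    push_neg at hc
    obtain ⟨n, hn⟩ := huu2 (f t) hc
    exact absurd (hau n t (le_trans (hA2 (Set.mem_range_self n)) (le_trans le_sup_right ht)))
      (not_lt.mpr hn)

end LongRay
namespace LongRay

open Filter Topology

lemma club_unbounded_range {φ : LongRay → LongRay} (h : ∀ a, ∃ t, a ≤ t ∧ φ t = t) :
    ¬BddAbove (Set.range φ) := by
  rw [unbounded_iff]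
  intro z
  obtain ⟨z', hz'⟩ := exists_gt z
  obtain ⟨t, ht1, ht2⟩ := h z'
  exact ⟨φ t, Set.mem_range_self t, by rw [ht2]; exact lt_of_lt_of_le hz' ht1⟩

/-- Height independence : whether a slice of a continuous two-variable map is unbounded
does not depend on the height parameter. -/
lemma unbounded_slice_congr {ψ : LongRay × LongRay → LongRay} (hψ : Continuous ψ)
    {h0 : LongRay} (hu : ¬BddAbove (Set.range (fun t => ψ (t, h0)))) (h1 : LongRay) :
    ¬BddAbove (Set.range (fun t => ψ (t, h1))) := by
  set U : Set LongRay := {h | ¬BddAbove (Set.range (fun t => ψ (t, h)))} with hU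
  have hcont : ∀ h : LongRay, Continuous (fun t => ψ (t, h)) :=
    fun h => hψ.comp (continuous_id.prodMk continuous_const)
  have hcont2 : ∀ t : LongRay, Continuous (fun h => ψ (t, h)) :=
    fun t => hψ.comp (continuous_const.prodMk continuous_id)
  have hUclosed : IsClosed U := by
    rw [← closure_subset_iff_isClosed]
    intro h hh
    obtain ⟨hs, hsU, hst⟩ := seq_of_mem_closure hh
    have hclubs : ∀ i, Club {t | ψ (t, hs i) = t} := fun i => fix_club (hcont (hs i)) (hsU i)
    have hinter := club_iInter hclubs
    refine club_unbounded_range (fun a => ?_)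
    obtain ⟨t, ht1, ht2⟩ := hinter.2 a
    refine ⟨t, ht1, ?_⟩
    have h1' : Tendsto (fun i => ψ (t, hs i)) atTop (𝓝 (ψ (t, h))) :=
      ((hcont2 t).tendsto h).comp hst
    have h2' : ∀ i, ψ (t, hs i) = t := fun i => Set.mem_iInter.mp ht2 i
    have h3' : Tendsto (fun i => ψ (t, hs i)) atTop (𝓝 t) := by
      simp only [h2']
      exact tendsto_const_nhds
    exact tendsto_nhds_unique h1' h3'
  have hUopen : IsOpen U := by
    rw [← isClosed_compl_iff]
    rw [← closure_subset_iff_isClosed]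
    intro h hh
    obtain ⟨hs, hsU, hst⟩ := seq_of_mem_closure hh
    have hb : ∀ i, BddAbove (Set.range (fun t => ψ (t, hs i))) := by
      intro i
      have := hsU i
      simp only [hU, Set.mem_compl_iff, Set.mem_setOf_eq, not_not] at this
      exact this
    have hev : ∀ i : ℕ, ∃ a v, ∀ t, a ≤ t → ψ (t, hs i) = v := by
      intro i
      exact eventually_const (hcont (hs i)) (hb i)
    choose av vv hav using hev
    obtain ⟨A, hA⟩ := bddAbove_range_seq av
    obtain ⟨Z, hZ⟩ := bddAbove_range_seq vv
    simp only [hU, Set.mem_compl_iff, Set.mem_setOf_eq, not_not]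
    obtain ⟨M, hM⟩ := image_Iic_bddAbove (hcont h) A
    refine ⟨M ⊔ Z, ?_⟩
    rintro _ ⟨t, rfl⟩
    rcases le_total t A with hta | hta
    · exact le_trans (hM (Set.mem_image_of_mem _ hta)) le_sup_left
    · refine le_trans ?_ le_sup_right
      have h1' : Tendsto (fun i => ψ (t, hs i)) atTop (𝓝 (ψ (t, h))) :=
        ((hcont2 t).tendsto h).comp hst
      refine le_of_tendsto h1' (Eventually.of_forall (fun i => ?_))
      rw [hav i t (le_trans (hA (Set.mem_range_self i)) hta)]
      exact hZ (Set.mem_range_self i)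
  have : U = Set.univ := IsClopen.eq_univ ⟨hUclosed, hUopen⟩ ⟨h0, hu⟩
  have h1m : h1 ∈ U := this ▸ Set.mem_univ h1
  exact h1m

end LongRay
namespace LongRay

open Filter Topology

lemma club_univ : Club (Set.univ : Set LongRay) :=
  ⟨isClosed_univ, fun a => ⟨a, le_refl a, trivial⟩⟩

lemma club_Ici (a : LongRay) : Club (Set.Ici a) :=
  ⟨isClosed_Ici, fun b => ⟨a ⊔ b, le_sup_right, Set.mem_Ici.mpr le_sup_left⟩⟩

lemma club_inter {C D : Set LongRay} (hC : Club C) (hD : Club D) : Club (C ∩ D) := by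
  have h : C ∩ D = ⋂ m : ℕ, (if m = 0 then C else D) := by
    ext x
    simp only [Set.mem_inter_iff, Set.mem_iInter]
    constructor
    · rintro ⟨h1, h2⟩ m
      by_cases hm : m = 0 <;> simp [hm, h1, h2]
    · intro h
      have h1 := h 0
      have h2 := h 1
      simp at h1 h2
      exact ⟨h1, h2⟩
  rw [h]
  apply club_iInter
  intro m
  by_cases hm : m = 0 <;> simp [hm, hC, hD]

lemma club_biInter {n : ℕ} (s : Finset (Fin n)) (P : Fin n → Set LongRay)
    (h : ∀ i ∈ s, Club (P i)) : Club (⋂ i ∈ s, P i) := by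
  classical
  induction s using Finset.induction with
  | empty => simpa using club_univ
  | @insert j s hj ih =>
    rw [Finset.set_biInter_insert]
    exact club_inter (h _ (Finset.mem_insert_self _ _))
      (ih (fun i hi => h i (Finset.mem_insert_of_mem hi)))

variable {n : ℕ}

/-- The parametrization of the `I`-diagonal at height `c`. -/
def dd (I : Finset (Fin n)) (c : Fin n → LongRay) (t : LongRay) : Fin n → LongRay :=
  fun i => if i ∈ I then t else c i

lemma continuous_dd (I : Finset (Fin n)) (c : Fin n → LongRay) : Continuous (dd I c) := by
  apply continuous_pi
  intro i
  by_cases hi : i ∈ I <;> simp only [dd, hi, if_true, if_false]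
  · exact continuous_id
  · exact continuous_const

lemma delta_eq_range {I : Finset (Fin n)} (hI : I.Nonempty) (c : Fin n → LongRay) :
    Delta n I c = Set.range (dd I c) := by
  obtain ⟨i0, hi0⟩ := hI
  ext x
  constructor
  · rintro ⟨h1, h2⟩
    refine ⟨x i0, ?_⟩
    funext i
    by_cases hi : i ∈ I
    · simp only [dd, hi, if_true]
      exact h1 i0 hi0 i hi
    · simp only [dd, hi, if_false]
      exact (h2 i hi).symm
  · rintro ⟨t, rfl⟩
    constructor
    · intro i hi i' hi'
      simp [dd, hi, hi']
    · intro j hj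
      simp [dd, hj]

/-- `k`-th coordinate of `F` along the `I`-diagonal at height `c`. -/
def phi (F : (Fin n → LongRay) → (Fin n → LongRay)) (I : Finset (Fin n))
    (c : Fin n → LongRay) (k : Fin n) : LongRay → LongRay :=
  fun t => F (dd I c t) k

lemma continuous_phi {F : (Fin n → LongRay) → (Fin n → LongRay)} (hF : Continuous F)
    (I : Finset (Fin n)) (c : Fin n → LongRay) (k : Fin n) : Continuous (phi F I c k) :=
  (continuous_apply k).comp (hF.comp (continuous_dd I c))

/-- `F` is unbounded in direction `k` along the `I`-diagonal at height `c`. -/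
def Unb (F : (Fin n → LongRay) → (Fin n → LongRay)) (I : Finset (Fin n))
    (c : Fin n → LongRay) (k : Fin n) : Prop :=
  ¬BddAbove (Set.range (phi F I c k))

/-- Height independence for one coordinate update. -/
lemma unb_update {F : (Fin n → LongRay) → (Fin n → LongRay)} (hF : Continuous F)
    {I : Finset (Fin n)} {c : Fin n → LongRay} {k : Fin n} (j : Fin n) (x : LongRay)
    (h : Unb F I c k) : Unb F I (Function.update c j x) k := by
  classical
  by_cases hj : j ∈ I
  · have : dd I (Function.update c j x) = dd I c := by
      funext t i
      by_cases hi : i ∈ I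
      · simp [dd, hi]
      · simp only [dd, hi, if_false]
        have hij : i ≠ j := by rintro rfl; exact hi hj
        rw [Function.update_of_ne hij x c]
    unfold Unb phi
    rw [this]
    exact h
  · -- use the two-variable lemma
    set ψ : LongRay × LongRay → LongRay :=
      fun p => F (dd I (Function.update c j p.2) p.1) k with hψdef
    have hψ : Continuous ψ := by
      apply (continuous_apply k).comp
      apply hF.comp
      apply continuous_pi
      intro i
      by_cases hi : i ∈ I
      · simpa [dd, hi] using continuous_fst
      · by_cases hij : i = j
        · subst hij
          simpa [dd, hi, Function.update_self] using continuous_snd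
        · simpa [dd, hi, Function.update_of_ne hij] using continuous_const
    have h0 : ¬BddAbove (Set.range (fun t => ψ (t, c j))) := by
      have : (fun t => ψ (t, c j)) = phi F I c k := by
        funext t
        simp only [hψdef, phi]
        congr 1
        funext i
        by_cases hi : i ∈ I
        · simp [dd, hi]
        · by_cases hij : i = j
          · subst hij; simp [dd, hi, Function.update_self]
          · simp [dd, hi, Function.update_of_ne hij]
      rw [this]
      exact h
    exact unbounded_slice_congr hψ h0 x

end LongRay
namespace LongRay

open Filter Topology

variable {n : ℕ}

/-- Full height independence. -/
lemma unb_congr {F : (Fin n → LongRay) → (Fin n → LongRay)} (hF : Continuous F)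
    {I : Finset (Fin n)} {k : Fin n} {c c' : Fin n → LongRay}
    (h : Unb F I c k) : Unb F I c' k := by
  classical
  have key : ∀ s : Finset (Fin n), Unb F I (fun i => if i ∈ s then c' i else c i) k := by
    intro s
    induction s using Finset.induction with
    | empty => simpa using h
    | @insert j s hj ih =>
      have heq : (fun i => if i ∈ insert j s then c' i else c i) =
          Function.update (fun i => if i ∈ s then c' i else c i) j (c' j) := by
        funext i
        by_cases hij : i = j
        · subst hij
          simp [Function.update_self]
        · rw [Function.update_of_ne hij]
          simp [Finset.mem_insert, hij]
      rw [heq]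
      exact unb_update hF j (c' j) ih
  have := key Finset.univ
  simpa using this

lemma delta_first {K : Finset (Fin n)} {c : Fin n → LongRay} {y : Fin n → LongRay}
    (hy : y ∈ Delta n K c) : ∀ i ∈ K, ∀ i' ∈ K, y i = y i' := hy.1

lemma delta_second {K : Finset (Fin n)} {c : Fin n → LongRay} {y : Fin n → LongRay}
    (hy : y ∈ Delta n K c) : ∀ j ∉ K, y j = c j := hy.2

/-- Characterization of the direction relation. -/
lemma dirRel_iff {F : (Fin n → LongRay) → (Fin n → LongRay)} (hF : Continuous F)
    {I K : Finset (Fin n)} (hI : I.Nonempty) :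
    DirRel n F I K ↔ K.Nonempty ∧ ∀ k, (k ∈ K ↔ Unb F I (fun _ => rayZero) k) := by
  classical
  set z0 : Fin n → LongRay := fun _ => rayZero with hz0
  constructor
  · rintro ⟨c, hc⟩
    have hK : K.Nonempty := by
      rcases K.eq_empty_or_nonempty with rfl | h
      · exact absurd ⟨⊥, fun y _ j hj => absurd hj (by simp)⟩ hc
      · exact h
    refine ⟨hK, fun k => ⟨?_, ?_⟩⟩
    · -- k ∈ K → unbounded
      intro hk
      rw [Unb, unbounded_iff]
      intro z
      push_neg at hc
      obtain ⟨y, hy, j, hj, hzy⟩ := hc z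
      have hy1 : y ∈ F '' Delta n I z0 := hy.1
      rw [delta_eq_range hI, ← Set.range_comp] at hy1
      obtain ⟨t, rfl⟩ := hy1
      have : (F ∘ dd I z0) t j = (F ∘ dd I z0) t k := delta_first hy.2 j hj k hk
      refine ⟨phi F I z0 k t, Set.mem_range_self t, ?_⟩
      rw [show phi F I z0 k t = (F ∘ dd I z0) t k from rfl, ← this]
      exact hzy
    · -- unbounded → k ∈ K
      intro hunb
      by_contra hkK
      have hD : Club {t | phi F I z0 k t = t} := fix_club (continuous_phi hF I z0 k) hunb
      set E : Set LongRay := {t | phi F I z0 k t = c k} with hE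
      have hEclosed : IsClosed E := isClosed_eq (continuous_phi hF I z0 k) continuous_const
      have hEbdd : BddAbove E := by
        by_contra hEb
        have hEclub : Club E := ⟨hEclosed, fun a => by
          obtain ⟨x, hx1, hx2⟩ := unbounded_iff.mp hEb a
          exact ⟨x, le_of_lt hx2, hx1⟩⟩
        obtain ⟨z', hz'⟩ := exists_gt (c k)
        obtain ⟨t, ht1, ht2, ht3⟩ := (club_inter hD hEclub).2 z'
        have h1 : phi F I z0 k t = t := ht2
        have h2 : phi F I z0 k t = c k := ht3
        rw [h1] at h2
        exact absurd (lt_of_lt_of_le hz' ht1) (not_lt.mpr (le_of_eq h2))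
      obtain ⟨bE, hbE⟩ := hEbdd
      have hM : ∀ k' : Fin n, ∃ M, ∀ y ∈ phi F I z0 k' '' Set.Iic bE, y ≤ M := by
        intro k'
        obtain ⟨M, hM⟩ := image_Iic_bddAbove (continuous_phi hF I z0 k') bE
        exact ⟨M, fun y hy => hM hy⟩
      choose M hMspec using hM
      set z : LongRay := Finset.univ.sup M with hzdef
      push_neg at hc
      obtain ⟨y, hy, j, hj, hzy⟩ := hc z
      have hy1 : y ∈ F '' Delta n I z0 := hy.1
      rw [delta_eq_range hI, ← Set.range_comp] at hy1
      obtain ⟨t, rfl⟩ := hy1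
      have hyk : phi F I z0 k t = c k := delta_second hy.2 k hkK
      have htE : t ∈ E := hyk
      have htle : t ≤ bE := hbE htE
      have : phi F I z0 j t ≤ z := by
        refine le_trans (hMspec j _ (Set.mem_image_of_mem _ htle)) ?_
        exact Finset.le_sup (Finset.mem_univ j)
      exact absurd this (not_le.mpr hzy)
  · rintro ⟨hK, hchar⟩
    have hFix : ∀ k ∈ K, Club {t | phi F I z0 k t = t} :=
      fun k hk => fix_club (continuous_phi hF I z0 k) ((hchar k).mp hk)
    have hev : ∀ j : Fin n, ∃ a v, j ∉ K → ∀ t, a ≤ t → phi F I z0 j t = v := by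
      intro j
      by_cases hj : j ∈ K
      · exact ⟨⊥, ⊥, fun h => absurd hj h⟩
      · have hb : BddAbove (Set.range (phi F I z0 j)) := by
          have := (hchar j)
          rw [Unb] at this
          by_contra hcon
          exact hj (this.mpr hcon)
        obtain ⟨a, v, hav⟩ := eventually_const (continuous_phi hF I z0 j) hb
        exact ⟨a, v, fun _ => hav⟩
    choose a v hav using hev
    set c' : Fin n → LongRay := fun j => if j ∈ K then ⊥ else v j with hc'
    set A : LongRay := Finset.univ.sup a with hA
    have hCl : Club (⋂ k ∈ K, {t | phi F I z0 k t = t}) := club_biInter K _ hFix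
    refine ⟨c', ?_⟩
    rintro ⟨z, hz⟩
    obtain ⟨k0, hk0⟩ := hK
    obtain ⟨z', hz'⟩ := exists_gt z
    obtain ⟨t, ht1, ht2, ht3⟩ := (club_inter hCl (club_Ici (A ⊔ z'))).2 ⊥
    have htfix : ∀ k ∈ K, phi F I z0 k t = t := by
      intro k hk
      exact Set.mem_iInter.mp (Set.mem_iInter.mp ht2 k) hk
    have htA : A ≤ t := le_trans le_sup_left ht3
    have htz' : z' ≤ t := le_trans le_sup_right ht3
    set y : Fin n → LongRay := F (dd I z0 t) with hy
    have hymem : y ∈ F '' Delta n I z0 := by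
      rw [delta_eq_range hI]
      exact Set.mem_image_of_mem F (Set.mem_range_self t)
    have hydelta : y ∈ Delta n K c' := by
      constructor
      · intro i hi i' hi'
        show phi F I z0 i t = phi F I z0 i' t
        rw [htfix i hi, htfix i' hi']
      · intro j hjK
        show phi F I z0 j t = c' j
        rw [hav j hjK t (le_trans (Finset.le_sup (Finset.mem_univ j)) htA)]
        simp [hc', hjK]
    have := hz y ⟨hymem, hydelta⟩ k0 hk0
    have hyk0 : y k0 = t := htfix k0 hk0
    rw [hyk0] at this
    exact absurd (lt_of_lt_of_le hz' (le_trans htz' this)) (lt_irrefl z)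

end LongRay
namespace LongRay

open Filter Topology

variable {n : ℕ}

lemma comp_bounded {f g : (Fin n → LongRay) → (Fin n → LongRay)}
    (hf : Continuous f) (hg : Continuous g) {I : Finset (Fin n)}
    (hall : ∀ j, ¬ Unb g I (fun _ => rayZero) j) :
    ∀ k, ¬ Unb (fun x => f (g x)) I (fun _ => rayZero) k := by
  classical
  set z0 : Fin n → LongRay := fun _ => rayZero with hz0
  have hev : ∀ j : Fin n, ∃ a v, ∀ t, a ≤ t → phi g I z0 j t = v := by
    intro j
    have hb : BddAbove (Set.range (phi g I z0 j)) := not_not.mp (hall j)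
    exact eventually_const (continuous_phi hg I z0 j) hb
  choose a v hav using hev
  set A : LongRay := Finset.univ.sup a with hA
  have hkey : ∀ t, A ≤ t → g (dd I z0 t) = v := by
    intro t ht
    funext j
    exact hav j t (le_trans (Finset.le_sup (Finset.mem_univ j)) ht)
  intro k
  rw [Unb, not_not]
  obtain ⟨M, hM⟩ := image_Iic_bddAbove (continuous_phi (hf.comp hg) I z0 k) A
  refine ⟨M ⊔ f v k, ?_⟩
  rintro _ ⟨t, rfl⟩
  rcases le_total t A with ht | ht
  · exact le_trans (hM (Set.mem_image_of_mem _ ht)) le_sup_left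
  · refine le_trans (le_of_eq ?_) le_sup_right
    show f (g (dd I z0 t)) k = f v k
    rw [hkey t ht]

lemma comp_unb_iff {f g : (Fin n → LongRay) → (Fin n → LongRay)}
    (hf : Continuous f) (hg : Continuous g) {I J : Finset (Fin n)}
    (hJchar : ∀ j, j ∈ J ↔ Unb g I (fun _ => rayZero) j) :
    ∀ k, (Unb (fun x => f (g x)) I (fun _ => rayZero) k ↔ Unb f J (fun _ => rayZero) k) := by
  classical
  set z0 : Fin n → LongRay := fun _ => rayZero with hz0
  have hFix : ∀ j ∈ J, Club {t | phi g I z0 j t = t} :=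
    fun j hj => fix_club (continuous_phi hg I z0 j) ((hJchar j).mp hj)
  have hev : ∀ j : Fin n, ∃ a v, j ∉ J → ∀ t, a ≤ t → phi g I z0 j t = v := by
    intro j
    by_cases hj : j ∈ J
    · exact ⟨⊥, ⊥, fun h => absurd hj h⟩
    · have hb : BddAbove (Set.range (phi g I z0 j)) :=
        not_not.mp (fun hcon => hj ((hJchar j).mpr hcon))
      obtain ⟨a, v, hav⟩ := eventually_const (continuous_phi hg I z0 j) hb
      exact ⟨a, v, fun _ => hav⟩
  choose a v0 hav using hev
  set v : Fin n → LongRay := fun j => if j ∈ J then ⊥ else v0 j with hv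
  set A : LongRay := Finset.univ.sup a with hA
  set Cmain : Set LongRay := (⋂ j ∈ J, {t | phi g I z0 j t = t}) ∩ Set.Ici A with hCmain
  have hCclub : Club Cmain := club_inter (club_biInter J _ hFix) (club_Ici A)
  have hkey : ∀ t ∈ Cmain, g (dd I z0 t) = dd J v t := by
    rintro t ⟨ht1, ht2⟩
    funext j
    by_cases hj : j ∈ J
    · have : phi g I z0 j t = t := Set.mem_iInter.mp (Set.mem_iInter.mp ht1 j) hj
      show phi g I z0 j t = dd J v t j
      rw [this]
      simp [dd, hj]
    · show phi g I z0 j t = dd J v t j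
      rw [hav j hj t (le_trans (Finset.le_sup (Finset.mem_univ j)) ht2)]
      simp [dd, hj, hv]
  intro k
  constructor
  · intro hk
    -- suffices at height v
    have hsuff : Unb f J v k := by
      by_contra hcon
      have hb : BddAbove (Set.range (phi f J v k)) := not_not.mp hcon
      obtain ⟨b, w, hbw⟩ := eventually_const (continuous_phi hf J v k) hb
      have hD : Club {t | phi (fun x => f (g x)) I z0 k t = t} :=
        fix_club (continuous_phi (hf.comp hg) I z0 k) hk
      have hval : ∀ t, t ∈ Cmain → b ≤ t → phi (fun x => f (g x)) I z0 k t = w := by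
        intro t htC htb
        show f (g (dd I z0 t)) k = w
        rw [hkey t htC]
        exact hbw t htb
      obtain ⟨t1, ht11, ht12, ht13⟩ := (club_inter (club_inter hCclub hD) (club_Ici b)).2 ⊥
      obtain ⟨t1', ht1'⟩ := exists_gt t1
      obtain ⟨t2, ht21, ht22, ht23⟩ := (club_inter (club_inter hCclub hD) (club_Ici b)).2 t1'
      have e1 : t1 = w := by rw [← ht12.2]; exact hval t1 ht12.1 ht13
      have e2 : t2 = w := by rw [← ht22.2]; exact hval t2 ht22.1 ht23
      have : t1 < t2 := lt_of_lt_of_le ht1' ht21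
      rw [e1, e2] at this
      exact lt_irrefl w this
    exact unb_congr hf hsuff
  · intro hk
    have hkv : Unb f J v k := unb_congr hf hk
    have hE : Club {t | phi f J v k t = t} := fix_club (continuous_phi hf J v k) hkv
    rw [Unb, unbounded_iff]
    intro z
    obtain ⟨z', hz'⟩ := exists_gt z
    obtain ⟨t, ht1, ht2, ht3⟩ := (club_inter hCclub hE).2 z'
    refine ⟨phi (fun x => f (g x)) I z0 k t, Set.mem_range_self t, ?_⟩
    have : phi (fun x => f (g x)) I z0 k t = t := by
      show f (g (dd I z0 t)) k = t
      rw [hkey t ht2]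
      exact ht3
    rw [this]
    exact lt_of_lt_of_le hz' ht1

end LongRay

/-- `D(f ∘ g) = D(g) · D(f)`. -/
theorem direction_matrix_mul (n : ℕ) (f g : (Fin n → LongRay) → (Fin n → LongRay))
    (hf : Continuous f) (hg : Continuous g)
    (I K : Finset (Fin n)) (hI : I.Nonempty) (hK : K.Nonempty) :
    DirRel n (f ∘ g) I K ↔
      ∃ J : Finset (Fin n), J.Nonempty ∧ DirRel n g I J ∧ DirRel n f J K := by
  classical
  constructor
  · intro h
    obtain ⟨-, hchar⟩ := (LongRay.dirRel_iff (hf.comp hg) hI).mp h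
    set J : Finset (Fin n) :=
      Finset.univ.filter (fun j => LongRay.Unb g I (fun _ => rayZero) j) with hJ
    have hJchar : ∀ j, j ∈ J ↔ LongRay.Unb g I (fun _ => rayZero) j := by
      intro j
      simp [hJ]
    have hJne : J.Nonempty := by
      rcases J.eq_empty_or_nonempty with hJe | h'
      · exfalso
        have hall : ∀ j, ¬ LongRay.Unb g I (fun _ => rayZero) j := by
          intro j hj
          have : j ∈ J := (hJchar j).mpr hj
          rw [hJe] at this
          exact absurd this (Finset.notMem_empty j)
        obtain ⟨k0, hk0⟩ := hK
        exact LongRay.comp_bounded hf hg hall k0 ((hchar k0).mp hk0)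
      · exact h'
    refine ⟨J, hJne, ?_, ?_⟩
    · exact (LongRay.dirRel_iff hg hI).mpr ⟨hJne, hJchar⟩
    · refine (LongRay.dirRel_iff hf hJne).mpr ⟨hK, fun k => ?_⟩
      rw [← LongRay.comp_unb_iff hf hg hJchar k]
      exact hchar k
  · rintro ⟨J, hJne, hgIJ, hfJK⟩
    obtain ⟨-, hJchar⟩ := (LongRay.dirRel_iff hg hI).mp hgIJ
    obtain ⟨-, hKchar⟩ := (LongRay.dirRel_iff hf hJne).mp hfJK
    refine (LongRay.dirRel_iff (hf.comp hg) hI).mpr ⟨hK, fun k => ?_⟩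
    rw [show LongRay.Unb (f ∘ g) I (fun _ => rayZero) k =
      LongRay.Unb (fun x => f (g x)) I (fun _ => rayZero) k from rfl,
      LongRay.comp_unb_iff hf hg hJchar k]
    exact hKchar k
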